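/- For positive integers N, m with 1 ≤ N, the determinant of the N×N matrix whose (i,j)-entry is the binomial coefficient C(m+i, m-i+j) equals ∏_{i=1}^{N} (N+m-i+1)! · (i-1)! · (2m+i+1)_{i-1} / ((m+i-1)! · (2N-2i+1)!), where (a)_k denotes the shifted factorial a(a+1)···(a+k-1). -/

import Mathlib

open Finset Matrix Polynomial Nat

/-- The shifted factorial (Pochhammer symbol) `(x)_k = x(x+1)⋯(x+k-1)`. -/
def poch (x : ℚ) (k : ℕ) : ℚ := ∏ t ∈ Finset.range k, (x + t)

/-- Product-form matrix with generic row values `X`. -/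
noncomputable def Mg (N m : ℕ) (X : Fin N → ℚ) : Matrix (Fin N) (Fin N) ℚ :=
  Matrix.of fun i j =>
    (∏ t ∈ Finset.range (j : ℕ), (2 * X i - 1 - (t : ℚ))) *
    (∏ t ∈ Finset.Ico ((j : ℕ) + 1) N, (X i - ((m : ℚ) + 1 + t)))

/-- The column polynomial. -/
noncomputable def Pcol (N m : ℕ) (j : ℕ) : Polynomial ℚ :=
  (∏ t ∈ Finset.range j, (Polynomial.C 2 * Polynomial.X - Polynomial.C (1 + (t : ℚ)))) *
  (∏ t ∈ Finset.Ico (j + 1) N, (Polynomial.X - Polynomial.C ((m : ℚ) + 1 + t)))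

lemma fac_ne (c : ℚ) : Polynomial.C 2 * Polynomial.X - Polynomial.C c ≠ 0 := by
  intro h
  have : (Polynomial.C 2 * Polynomial.X - Polynomial.C c).coeff 1 = 0 := by rw [h]; simp
  simp [Polynomial.coeff_sub, Polynomial.coeff_C_mul, Polynomial.coeff_X_one,
    Polynomial.coeff_C] at this

lemma fac_deg (c : ℚ) : (Polynomial.C 2 * Polynomial.X - Polynomial.C c).natDegree = 1 := by
  have h : Polynomial.C 2 * Polynomial.X - Polynomial.C c
      = Polynomial.C 2 * (Polynomial.X - Polynomial.C (c / 2)) := by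
    rw [mul_sub, ← Polynomial.C_mul, show (2:ℚ)*(c/2) = c by ring]
  rw [h, Polynomial.natDegree_mul (by simp) (Polynomial.X_sub_C_ne_zero _)]
  simp [Polynomial.natDegree_X_sub_C]

lemma Pcol_deg (N m j : ℕ) (hj : j < N) : (Pcol N m j).natDegree < N := by
  rw [Pcol, Polynomial.natDegree_mul, Polynomial.natDegree_prod _ _ (fun t _ => fac_ne _),
    Polynomial.natDegree_prod _ _ (fun t _ => Polynomial.X_sub_C_ne_zero _)]
  · simp only [fac_deg, Polynomial.natDegree_X_sub_C]
    simp only [Finset.sum_const, Nat.card_Ico, card_range, smul_eq_mul, mul_one]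
    omega
  · exact Finset.prod_ne_zero_iff.2 fun t _ => fac_ne _
  · exact Finset.prod_ne_zero_iff.2 fun t _ => Polynomial.X_sub_C_ne_zero _

lemma Pcol_eval (N m j : ℕ) (x : ℚ) :
    (Pcol N m j).eval x = (∏ t ∈ Finset.range j, (2 * x - 1 - (t : ℚ))) *
      (∏ t ∈ Finset.Ico (j + 1) N, (x - ((m : ℚ) + 1 + t))) := by
  rw [Pcol, Polynomial.eval_mul, Polynomial.eval_prod, Polynomial.eval_prod]
  congr 1
  · exact Finset.prod_congr rfl fun t _ => by simp; ring
  · exact Finset.prod_congr rfl fun t _ => by simp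

/-- Coefficient matrix. -/
noncomputable def Cmat (N m : ℕ) : Matrix (Fin N) (Fin N) ℚ :=
  Matrix.of fun k j => (Pcol N m (j : ℕ)).coeff (k : ℕ)

lemma Mg_eq (N m : ℕ) (X : Fin N → ℚ) :
    Mg N m X = Matrix.vandermonde X * Cmat N m := by
  ext i j
  rw [Matrix.mul_apply]
  have hdeg : (Pcol N m (j : ℕ)).natDegree < N := Pcol_deg N m j j.isLt
  have he := Polynomial.eval_eq_sum_range' hdeg (X i)
  have : ∑ k : Fin N, Matrix.vandermonde X i k * Cmat N m k j
      = ∑ k ∈ Finset.range N, (Pcol N m (j : ℕ)).coeff k * X i ^ k := by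
    rw [← Fin.sum_univ_eq_sum_range]
    exact Finset.sum_congr rfl fun k _ => by
      simp [Matrix.vandermonde, Cmat, mul_comm]
  rw [this, ← he, Pcol_eval]
  simp [Mg]

lemma det_Mg_indep (N m : ℕ) :
    (Mg N m (fun i => (i : ℚ) + 1)).det = (Mg N m (fun i => (m : ℚ) + 2 + i)).det := by
  rw [Mg_eq, Mg_eq, Matrix.det_mul, Matrix.det_mul, Matrix.det_vandermonde,
    Matrix.det_vandermonde]
  congr 1
  exact Finset.prod_congr rfl fun i _ => Finset.prod_congr rfl fun j _ => by ring

lemma Mstar_zero (n m : ℕ) (i j : Fin (n+1)) (hji : (j:ℕ) ≤ (i:ℕ)) (hi : (i:ℕ) < n) :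
    Mg (n+1) m (fun i => (m : ℚ) + 2 + i) i j = 0 := by
  have hmem : (i:ℕ) + 1 ∈ Finset.Ico ((j:ℕ)+1) (n+1) := by
    simp only [Finset.mem_Ico]; omega
  have : (∏ t ∈ Finset.Ico ((j : ℕ) + 1) (n+1),
      (((m : ℚ) + 2 + i) - ((m : ℚ) + 1 + t))) = 0 := by
    apply Finset.prod_eq_zero hmem
    push_cast
    ring
  simp only [Mg, Matrix.of_apply, this, mul_zero]

lemma det_Mstar (n m : ℕ) :
    (Mg (n+1) m (fun i => (m : ℚ) + 2 + i)).det =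
      (-1 : ℚ)^n * (∏ t ∈ Finset.Ico 1 (n+1), ((n : ℚ) + 1 - t)) *
      ∏ i : Fin n, ((∏ t ∈ Finset.range ((i:ℕ)+1), (2 * ((m : ℚ) + 2 + i) - 1 - t)) *
         (∏ t ∈ Finset.Ico ((i:ℕ)+2) (n+1), (((i:ℕ) : ℚ) + 1 - t))) := by
  set A := Mg (n+1) m (fun i => (m : ℚ) + 2 + i) with hA
  rw [Matrix.det_succ_column_zero]
  rw [Finset.sum_eq_single_of_mem (Fin.last n) (Finset.mem_univ _) ?side]
  case side =>
    intro b _ hb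
    have hbn : (b:ℕ) < n := by
      have := b.isLt
      have : (b:ℕ) ≠ n := fun h => hb (Fin.ext (by simp [h, Fin.val_last]))
      omega
    have h0 : A b 0 = 0 := Mstar_zero n m b 0 (by simp) hbn
    rw [h0]
    ring
  have hsub : (A.submatrix (Fin.last n).succAbove Fin.succ).det
      = ∏ i : Fin n, A i.castSucc i.succ := by
    rw [Matrix.det_of_upperTriangular]
    · exact Finset.prod_congr rfl fun i _ => by
        simp [Fin.succAbove_last]
    · intro i j hij
      simp only [Matrix.submatrix_apply, Fin.succAbove_last]
      have hij' : (j:ℕ) < (i:ℕ) := hij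
      exact Mstar_zero n m i.castSucc j.succ
        (by simp only [Fin.val_succ, Fin.coe_castSucc]; omega)
        (by simpa using i.isLt)
  rw [hsub]
  have hA0 : A (Fin.last n) 0 = ∏ t ∈ Finset.Ico 1 (n+1), ((n : ℚ) + 1 - t) := by
    simp only [hA, Mg, Matrix.of_apply, Fin.val_last, Fin.val_zero, Finset.range_zero,
      Finset.prod_empty, one_mul, zero_add]
    exact Finset.prod_congr rfl fun t _ => by push_cast; ring
  have hdiag : ∀ i : Fin n, A i.castSucc i.succ =
      (∏ t ∈ Finset.range ((i:ℕ)+1), (2 * ((m : ℚ) + 2 + i) - 1 - t)) *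
      (∏ t ∈ Finset.Ico ((i:ℕ)+2) (n+1), (((i:ℕ) : ℚ) + 1 - t)) := by
    intro i
    simp only [hA, Mg, Matrix.of_apply, Fin.val_succ, Fin.coe_castSucc]
    congr 1
    exact Finset.prod_congr rfl fun t _ => by push_cast; ring
  rw [hA0, Fin.val_last, Finset.prod_congr rfl fun i _ => hdiag i]

lemma asc_prod (b : ℕ) : ∀ K : ℕ, (∏ s ∈ Finset.range K, (b + 1 + s)) = (b+1).ascFactorial K
  | 0 => by simp
  | (K+1) => by
      rw [Finset.prod_range_succ, asc_prod b K, Nat.ascFactorial_succ]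
      ring

lemma entry_eq (N m i j : ℕ) (hm : 0 < m) (hi : i < N) (hj : j < N) :
    (if m + (j + 1) < i + 1 then (0:ℚ)
      else ((m + (i + 1)).choose (m + (j + 1) - (i + 1)) : ℚ)) =
    (((m + i + 1).factorial : ℚ) / (((2*i+1).factorial : ℚ) * (((m + N - 1 - i).factorial : ℚ)))) *
      ((-1 : ℚ)^(N - 1 - j) *
        ((∏ t ∈ Finset.range j, (2 * ((i : ℚ) + 1) - 1 - (t : ℚ))) *
         (∏ t ∈ Finset.Ico (j + 1) N, (((i : ℚ) + 1) - ((m : ℚ) + 1 + t))))) := by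
  by_cases h1 : m + j < i
  · -- zero case from the `if`
    rw [if_pos (by omega)]
    have hmem : i - m ∈ Finset.Ico (j+1) N := by simp only [Finset.mem_Ico]; omega
    have hz : (∏ t ∈ Finset.Ico (j + 1) N, (((i : ℚ) + 1) - ((m : ℚ) + 1 + t))) = 0 := by
      apply Finset.prod_eq_zero hmem
      have : ((i - m : ℕ) : ℚ) = (i : ℚ) - m := by
        rw [Nat.cast_sub (by omega)]
      rw [this]; ring
    rw [hz]; ring
  · by_cases h2 : 2*i + 1 < j
    · -- zero case from the choose
      rw [if_neg (by omega)]
      have hz : (∏ t ∈ Finset.range j, (2 * ((i : ℚ) + 1) - 1 - (t : ℚ))) = 0 := by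
        apply Finset.prod_eq_zero (Finset.mem_range.mpr h2)
        push_cast; ring
      rw [Nat.choose_eq_zero_of_lt (by omega), hz]
      simp
    · -- main case
      rw [if_neg (by omega)]
      have hji : j ≤ 2*i+1 := by omega
      have hij : i ≤ m + j := by omega
      -- first product
      have hP1 : (∏ t ∈ Finset.range j, (2 * ((i : ℚ) + 1) - 1 - (t : ℚ)))
          = (((2*i+1).descFactorial j : ℕ) : ℚ) := by
        rw [Nat.descFactorial_eq_prod_range, Nat.cast_prod]
        refine Finset.prod_congr rfl fun t ht => ?_
        have ht' := Finset.mem_range.mp ht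
        rw [Nat.cast_sub (by omega)]
        push_cast; ring
      -- second product
      have hP2 : (∏ t ∈ Finset.Ico (j + 1) N, (((i : ℚ) + 1) - ((m : ℚ) + 1 + t)))
          = (-1 : ℚ)^(N - 1 - j) * (((m+j-i+1).ascFactorial (N-1-j) : ℕ) : ℚ) := by
        have step : ∀ t ∈ Finset.Ico (j+1) N,
            (((i : ℚ) + 1) - ((m : ℚ) + 1 + t)) = (-1) * (((m + t - i : ℕ) : ℚ)) := by
          intro t ht
          have ht' := Finset.mem_Ico.mp ht
          rw [Nat.cast_sub (by omega)]
          push_cast; ring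
        rw [Finset.prod_congr rfl step, Finset.prod_mul_distrib, Finset.prod_const,
          Nat.card_Ico]
        congr 1
        · congr 1; omega
        · rw [← Nat.cast_prod]
          congr 1
          rw [Finset.prod_Ico_eq_prod_range, ← asc_prod]
          refine Finset.prod_congr (by congr 1; omega) fun s hs => by omega
      rw [hP1, hP2]
      -- nat-level identity
      have key : (m + (i+1)).choose (m + (j + 1) - (i + 1)) *
          ((2*i+1).factorial * (m + N - 1 - i).factorial)
          = (m + i + 1).factorial * ((2*i+1).descFactorial j *
              (m+j-i+1).ascFactorial (N-1-j)) := by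
        have e1 : (2*i+1-j).factorial * (2*i+1).descFactorial j = (2*i+1).factorial :=
          Nat.factorial_mul_descFactorial (by omega)
        have e2 : (m+j-i).factorial * (m+j-i+1).ascFactorial (N-1-j)
            = (m + N - 1 - i).factorial := by
          rw [Nat.factorial_mul_ascFactorial]
          congr 1; omega
        have e3 : (m + (i+1)).choose (m + (j + 1) - (i + 1)) * (m + (j+1) - (i+1)).factorial *
            ((m + (i+1)) - (m + (j+1) - (i+1))).factorial = (m + (i+1)).factorial :=
          Nat.choose_mul_factorial_mul_factorial (by omega)
        have e4 : m + (j+1) - (i+1) = m + j - i := by omega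
        have e5 : (m + (i+1)) - (m + j - i) = 2*i+1-j := by omega
        rw [e4] at e3 ⊢
        rw [e5] at e3
        calc (m + (i+1)).choose (m + j - i) * ((2*i+1).factorial * (m + N - 1 - i).factorial)
            = (m + (i+1)).choose (m + j - i) *
              (((2*i+1-j).factorial * (2*i+1).descFactorial j) *
               ((m+j-i).factorial * (m+j-i+1).ascFactorial (N-1-j))) := by rw [e1, e2]
          _ = ((m + (i+1)).choose (m + j - i) * (m+j-i).factorial * (2*i+1-j).factorial) *
              ((2*i+1).descFactorial j * (m+j-i+1).ascFactorial (N-1-j)) := by ring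
          _ = (m + i + 1).factorial * ((2*i+1).descFactorial j *
              (m+j-i+1).ascFactorial (N-1-j)) := by
              rw [e3]; simp [Nat.add_assoc]
      have keyQ := congrArg (fun x : ℕ => (x : ℚ)) key
      push_cast at keyQ
      have hne1 : (((2*i+1).factorial : ℚ)) ≠ 0 := by
        exact_mod_cast Nat.factorial_ne_zero _
      have hne2 : (((m + N - 1 - i).factorial : ℚ)) ≠ 0 := by
        exact_mod_cast Nat.factorial_ne_zero _
      have h11 : (-1:ℚ)^(N-1-j) * (-1:ℚ)^(N-1-j) = 1 := by
        rw [← pow_add]; exact Even.neg_one_pow ⟨N-1-j, rfl⟩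
      have hcomb : ((-1:ℚ))^(N-1-j) * ((((2*i+1).descFactorial j : ℕ):ℚ) *
          (((-1:ℚ))^(N-1-j) * (((m+j-i+1).ascFactorial (N-1-j) : ℕ):ℚ)))
          = (((2*i+1).descFactorial j : ℕ):ℚ) *
            (((m+j-i+1).ascFactorial (N-1-j) : ℕ):ℚ) := by
        calc ((-1:ℚ))^(N-1-j) * ((((2*i+1).descFactorial j : ℕ):ℚ) *
            (((-1:ℚ))^(N-1-j) * (((m+j-i+1).ascFactorial (N-1-j) : ℕ):ℚ)))
            = ((-1:ℚ)^(N-1-j) * (-1:ℚ)^(N-1-j)) * ((((2*i+1).descFactorial j : ℕ):ℚ) *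
              (((m+j-i+1).ascFactorial (N-1-j) : ℕ):ℚ)) := by ring
          _ = _ := by rw [h11, one_mul]
      rw [hcomb]
      field_simp
      linear_combination keyQ

lemma poch_helper (x : ℚ) (K : ℕ) :
    (∏ t ∈ Finset.range K, (x + (K : ℚ) - 1 - (t : ℚ))) = poch x K := by
  rw [poch, ← Finset.prod_range_reflect (fun t => x + (t : ℚ)) K]
  refine Finset.prod_congr rfl fun t ht => ?_
  have ht' := Finset.mem_range.mp ht
  rw [Nat.cast_sub (by omega), Nat.cast_sub (by omega)]
  push_cast
  ring

lemma conv_a (n : ℕ) : (∏ t ∈ Finset.Ico 1 (n+1), ((n : ℚ) + 1 - t)) = (n ! : ℚ) := by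
  rw [Finset.prod_Ico_eq_prod_range]
  have : ∀ s ∈ Finset.range (n+1-1), ((n : ℚ) + 1 - ((1 + s : ℕ) : ℚ)) = ((n - s : ℕ) : ℚ) := by
    intro s hs
    have hs' := Finset.mem_range.mp hs
    rw [Nat.cast_sub (by omega)]
    push_cast; ring
  rw [Finset.prod_congr rfl this, ← Nat.cast_prod]
  congr 1
  have h : n + 1 - 1 = n := by omega
  rw [h, ← Nat.descFactorial_eq_prod_range, Nat.descFactorial_self]

lemma conv_b (m i : ℕ) :
    (∏ t ∈ Finset.range (i+1), (2 * ((m : ℚ) + 2 + i) - 1 - t))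
      = poch ((2*m+i+3 : ℕ) : ℚ) (i+1) := by
  rw [← poch_helper ((2*m+i+3 : ℕ) : ℚ) (i+1)]
  refine Finset.prod_congr rfl fun t _ => by push_cast; ring

lemma conv_c (n i : ℕ) (hi : i < n) :
    (∏ t ∈ Finset.Ico (i+2) (n+1), ((i : ℚ) + 1 - t))
      = (-1 : ℚ)^(n-1-i) * ((n-1-i)! : ℚ) := by
  rw [Finset.prod_Ico_eq_prod_range]
  have : ∀ s ∈ Finset.range (n+1-(i+2)), ((i : ℚ) + 1 - ((i+2+s : ℕ) : ℚ))
      = (-1) * ((s+1 : ℕ) : ℚ) := by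
    intro s _
    push_cast; ring
  rw [Finset.prod_congr rfl this, Finset.prod_mul_distrib, Finset.prod_const,
    Finset.card_range]
  congr 1
  · congr 1; omega
  · rw [← Nat.cast_prod, Finset.prod_range_add_one_eq_factorial]
    congr 2
    omega

lemma signs_cancel (n : ℕ) :
    (∏ j ∈ Finset.range (n+1), (-1 : ℚ)^(n-j)) *
      ((-1 : ℚ)^n * ∏ i ∈ Finset.range n, (-1 : ℚ)^(n-1-i)) = 1 := by
  rw [Finset.prod_pow_eq_pow_sum, Finset.prod_pow_eq_pow_sum, ← pow_add, ← pow_add]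
  have h1 : ∑ j ∈ Finset.range (n+1), (n - j) = ∑ j ∈ Finset.range (n+1), j := by
    rw [← Finset.sum_range_reflect (fun j => j) (n+1)]
    exact Finset.sum_congr rfl fun j _ => by omega
  have h2 : ∑ i ∈ Finset.range n, (n-1-i) = ∑ i ∈ Finset.range n, i := by
    rw [← Finset.sum_range_reflect (fun j => j) n]
  have h3 : ∑ j ∈ Finset.range (n+1), j = (∑ i ∈ Finset.range n, i) + n :=
    Finset.sum_range_succ _ n
  refine Even.neg_one_pow ?_
  refine ⟨∑ j ∈ Finset.range (n+1), j, by omega⟩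

lemma bookkeeping (n m : ℕ) :
    (∏ i ∈ Finset.range (n+1), (((m+i+1)! : ℚ) / (((2*i+1)! : ℚ) * ((m+n-i)! : ℚ)))) *
    ((∏ j ∈ Finset.range (n+1), (-1:ℚ)^(n-j)) *
     ((-1:ℚ)^n * ((n ! : ℚ) *
      ∏ i ∈ Finset.range n,
        (poch ((2*m+i+3 : ℕ):ℚ) (i+1) * ((-1:ℚ)^(n-1-i) * ((n-1-i)! : ℚ))))))
    = ∏ i ∈ Finset.Icc 1 (n+1),
        (((n+1) + m - i + 1)! : ℚ) * ((i-1)! : ℚ) * poch ((2*m+i+1 : ℕ):ℚ) (i-1) /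
          (((m+i-1)! : ℚ) * ((2*(n+1) - 2*i + 1)! : ℚ)) := by
  -- RHS to range form
  rw [← Finset.Ico_add_one_right_eq_Icc, Finset.prod_Ico_eq_prod_range, Nat.add_sub_cancel]

  have hterm : ∀ k ∈ Finset.range (n+1),
      (((n+1) + m - (1+k) + 1)! : ℚ) * (((1+k)-1)! : ℚ) *
          poch ((2*m+(1+k)+1 : ℕ):ℚ) ((1+k)-1) /
        (((m+(1+k)-1)! : ℚ) * ((2*(n+1) - 2*(1+k) + 1)! : ℚ))
      = ((n+m+1-k)! : ℚ) * ((k)! : ℚ) * poch ((2*m+k+2 : ℕ):ℚ) k /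
        (((m+k)! : ℚ) * ((2*(n-k)+1)! : ℚ)) := by
    intro k hk
    have hk' := Finset.mem_range.mp hk
    have e1 : (n+1) + m - (1+k) + 1 = n+m+1-k := by omega
    have e2 : (1+k)-1 = k := by omega
    have e3 : 2*m+(1+k)+1 = 2*m+k+2 := by omega
    have e4 : m+(1+k)-1 = m+k := by omega
    have e5 : 2*(n+1) - 2*(1+k) + 1 = 2*(n-k)+1 := by omega
    rw [e1, e2, e3, e4, e5]
  rw [Finset.prod_congr rfl hterm]
  -- reflections
  have r1 : (∏ k ∈ Finset.range (n+1), (((n+m+1-k)!) : ℚ))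
      = ∏ k ∈ Finset.range (n+1), ((m+k+1)! : ℚ) := by
    rw [← Finset.prod_range_reflect (fun k => (((n+m+1-k)!) : ℚ)) (n+1)]
    refine Finset.prod_congr rfl fun k hk => ?_
    have hk' := Finset.mem_range.mp hk
    congr 2
    omega
  have r2 : (∏ k ∈ Finset.range (n+1), (((m+k)!) : ℚ))
      = ∏ k ∈ Finset.range (n+1), ((m+n-k)! : ℚ) := by
    rw [← Finset.prod_range_reflect (fun k => (((m+k)!) : ℚ)) (n+1)]
    refine Finset.prod_congr rfl fun k hk => ?_
    have hk' := Finset.mem_range.mp hk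
    congr 2
    omega
  have r3 : (∏ k ∈ Finset.range (n+1), (((2*(n-k)+1)!) : ℚ))
      = ∏ k ∈ Finset.range (n+1), ((2*k+1)! : ℚ) := by
    rw [← Finset.prod_range_reflect (fun k => (((2*(n-k)+1)!) : ℚ)) (n+1)]
    refine Finset.prod_congr rfl fun k hk => ?_
    have hk' := Finset.mem_range.mp hk
    congr 2
    omega
  have r4 : (∏ i ∈ Finset.range n, (((n-1-i)!) : ℚ))
      = ∏ i ∈ Finset.range n, ((i)! : ℚ) := by
    rw [← Finset.prod_range_reflect (fun k => (((k)!) : ℚ)) n]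
  -- poch product split
  have rpoch : (∏ k ∈ Finset.range (n+1), poch ((2*m+k+2 : ℕ):ℚ) k)
      = ∏ i ∈ Finset.range n, poch ((2*m+i+3 : ℕ):ℚ) (i+1) := by
    rw [Finset.prod_range_succ' (fun k => poch ((2*m+k+2 : ℕ):ℚ) k) n]
    have h0 : poch ((2*m+0+2 : ℕ):ℚ) 0 = 1 := by simp [poch]
    rw [h0, mul_one]
    exact Finset.prod_congr rfl fun i _ => by congr 2
  -- factorial product split
  have rfac : (∏ k ∈ Finset.range (n+1), ((k)! : ℚ))
      = (∏ i ∈ Finset.range n, ((i)! : ℚ)) * (n ! : ℚ) :=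
    Finset.prod_range_succ _ n
  conv_rhs => rw [Finset.prod_div_distrib, Finset.prod_mul_distrib, Finset.prod_mul_distrib,
    Finset.prod_mul_distrib]
  rw [r1, r2, r3, rpoch, rfac]
  have hc : (∏ i ∈ Finset.range (n+1), (((m+i+1)! : ℚ) / (((2*i+1)! : ℚ) * ((m+n-i)! : ℚ))))
      = (∏ i ∈ Finset.range (n+1), ((m+i+1)! : ℚ)) /
        ((∏ i ∈ Finset.range (n+1), ((2*i+1)! : ℚ)) *
         (∏ i ∈ Finset.range (n+1), ((m+n-i)! : ℚ))) := by
    rw [Finset.prod_div_distrib, Finset.prod_mul_distrib]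
  have hs : (∏ i ∈ Finset.range n,
        (poch ((2*m+i+3 : ℕ):ℚ) (i+1) * ((-1:ℚ)^(n-1-i) * ((n-1-i)! : ℚ))))
      = (∏ i ∈ Finset.range n, poch ((2*m+i+3 : ℕ):ℚ) (i+1)) *
        ((∏ i ∈ Finset.range n, (-1:ℚ)^(n-1-i)) *
         (∏ i ∈ Finset.range n, (((n-1-i)!) : ℚ))) := by
    rw [Finset.prod_mul_distrib, Finset.prod_mul_distrib]
  rw [hc, hs, r4]
  have hsign := signs_cancel n
  set P1 := ∏ i ∈ Finset.range (n+1), ((m+i+1)! : ℚ) with hP1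
  set Q1 := ∏ i ∈ Finset.range (n+1), ((2*i+1)! : ℚ) with hQ1
  set Q2 := ∏ i ∈ Finset.range (n+1), ((m+n-i)! : ℚ) with hQ2
  set S1 := ∏ j ∈ Finset.range (n+1), (-1:ℚ)^(n-j) with hS1
  set S2 := ∏ i ∈ Finset.range n, (-1:ℚ)^(n-1-i) with hS2
  set Pp := ∏ i ∈ Finset.range n, poch ((2*m+i+3 : ℕ):ℚ) (i+1) with hPp
  set Pf := ∏ i ∈ Finset.range n, ((i)! : ℚ) with hPf
  have hQ1ne : Q1 ≠ 0 := by
    rw [hQ1]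
    exact Finset.prod_ne_zero_iff.2 fun i _ => by exact_mod_cast (Nat.factorial_ne_zero _)
  have hQ2ne : Q2 ≠ 0 := by
    rw [hQ2]
    exact Finset.prod_ne_zero_iff.2 fun i _ => by exact_mod_cast (Nat.factorial_ne_zero _)
  field_simp
  linear_combination (P1 * Pp * Pf) * hsign

/-- `det_{1≤i,j≤N} C(m+i, m-i+j) = ∏_{i=1}^{N} (N+m-i+1)!(i-1)!(2m+i+1)_{i-1}
/ ((m+i-1)!(2N-2i+1)!)`, where the binomial coefficient is `0` for a negative
lower index. -/
theorem det_binomial_simple_part (N m : ℕ) (hN : 1 ≤ N) (hm : 0 < m) :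
    Matrix.det (Matrix.of fun i j : Fin N =>
      (if m + (j.1 + 1) < i.1 + 1 then 0
       else ((m + (i.1 + 1)).choose (m + (j.1 + 1) - (i.1 + 1)) : ℚ))) =
    ∏ i ∈ Finset.Icc 1 N,
      ((N + m - i + 1).factorial : ℚ) * ((i - 1).factorial : ℚ) *
          poch ((2 * m + i + 1 : ℕ) : ℚ) (i - 1) /
        (((m + i - 1).factorial : ℚ) * ((2 * N - 2 * i + 1).factorial : ℚ)) := by
  obtain ⟨n, rfl⟩ : ∃ n, N = n + 1 := ⟨N - 1, by omega⟩
  set X0 : Fin (n+1) → ℚ := fun i => (i : ℚ) + 1 with hX0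
  set c : Fin (n+1) → ℚ := fun i =>
    ((m+(i:ℕ)+1)! : ℚ) / (((2*(i:ℕ)+1)! : ℚ) * (((m+(n+1)-1-(i:ℕ))! : ℚ))) with hc
  set d : Fin (n+1) → ℚ := fun j => (-1:ℚ)^((n+1)-1-(j:ℕ)) with hd
  have hmat : (Matrix.of fun i j : Fin (n+1) =>
      (if m + (j.1 + 1) < i.1 + 1 then (0:ℚ)
       else ((m + (i.1 + 1)).choose (m + (j.1 + 1) - (i.1 + 1)) : ℚ)))
      = Matrix.of fun i j : Fin (n+1) =>
          c i * ((Matrix.of fun i j : Fin (n+1) => d j * Mg (n+1) m X0 i j) i j) := by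
    ext i j
    have h := entry_eq (n+1) m (i:ℕ) (j:ℕ) hm i.isLt j.isLt
    simp only [Matrix.of_apply, Mg, hc, hd, hX0]
    exact h
  rw [hmat, Matrix.det_mul_column c, Matrix.det_mul_row d, det_Mg_indep, det_Mstar]
  -- rewrite the diagonal product
  have hdiag : (∏ i : Fin n, ((∏ t ∈ Finset.range ((i:ℕ)+1), (2 * ((m : ℚ) + 2 + i) - 1 - t)) *
         (∏ t ∈ Finset.Ico ((i:ℕ)+2) (n+1), (((i:ℕ) : ℚ) + 1 - t))))
      = ∏ i ∈ Finset.range n,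
          (poch ((2*m+i+3 : ℕ):ℚ) (i+1) * ((-1:ℚ)^(n-1-i) * ((n-1-i)! : ℚ))) := by
    rw [Fin.prod_univ_eq_prod_range
      (fun i => (∏ t ∈ Finset.range (i+1), (2 * ((m : ℚ) + 2 + i) - 1 - t)) *
         (∏ t ∈ Finset.Ico (i+2) (n+1), ((i : ℚ) + 1 - t))) n]
    refine Finset.prod_congr rfl fun i hi => ?_
    rw [conv_b, conv_c n i (Finset.mem_range.mp hi)]
  have hcprod : (∏ i : Fin (n+1), c i)
      = ∏ i ∈ Finset.range (n+1), (((m+i+1)! : ℚ) / (((2*i+1)! : ℚ) * ((m+n-i)! : ℚ))) := by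
    simp only [hc]
    rw [Fin.prod_univ_eq_prod_range
      (fun i => ((m+i+1)! : ℚ) / (((2*i+1)! : ℚ) * (((m+(n+1)-1-i)! : ℚ)))) (n+1)]
    rfl
  have hdprod : (∏ j : Fin (n+1), d j)
      = ∏ j ∈ Finset.range (n+1), (-1:ℚ)^(n-j) := by
    simp only [hd]
    rw [Fin.prod_univ_eq_prod_range (fun j => (-1:ℚ)^((n+1)-1-j)) (n+1)]
    rfl
  rw [hdiag, hcprod, hdprod, conv_a]
  rw [← bookkeeping n m]
  ring
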